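/- Over the alphabet A = {a, b}, let K = bA^* ∪ aaA^* ∪ (ab)^*. Then for every n ≥ 2 and all nonempty words w₁, …, wₙ over A, we have ⧢(w₁, …, wₙ) ∩ K ≠ ∅. -/

import Mathlib

namespace CTS

/-- Shuffle of two words: `ε ⧢ v = {v}`, `u ⧢ ε = {u}`,
`(x·u) ⧢ (y·v) = x·(u ⧢ y·v) ∪ y·(x·u ⧢ v)`. -/
def shuffle {α : Type*} : List α → List α → Set (List α)
  | [], v => {v}
  | u, [] => {u}
  | x :: u, y :: v =>
      (List.cons x) '' shuffle u (y :: v) ∪ (List.cons y) '' shuffle (x :: u) v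
  termination_by u v => u.length + v.length

/-- Shuffle of a tuple of words: `⧢() = {ε}` and
`⧢(w₁, …, wₘ₊₁) = ⋃_{v ∈ ⧢(w₁, …, wₘ)} v ⧢ wₘ₊₁`. -/
def Shuffles {α : Type*} (ws : List (List α)) : Set (List α) :=
  ws.foldl (fun S w => ⋃ v ∈ S, shuffle v w) {[]}

/-- `wpow u n` is the `n`-fold concatenation `u^n` of the word `u`. -/
def wpow {α : Type*} (u : List α) : ℕ → List α
  | 0 => []
  | n + 1 => u ++ wpow u n

/-- `star u = {u^n : n ∈ ℕ}`. -/
def star {α : Type*} (u : List α) : Set (List α) := {w | ∃ n, w = wpow u n}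

/-- Words that are (possibly empty) concatenations of blocks from `S`. -/
def ConcatsOf {α : Type*} (S : Set (List α)) : Set (List α) :=
  {w | ∃ L : List (List α), (∀ u ∈ L, u ∈ S) ∧ w = L.flatten}

/-- The two-letter alphabet `{a, b}`. -/
inductive AB : Type
  | a : AB
  | b : AB
deriving DecidableEq

section
variable {α : Type*}

lemma mem_shuffle_left : ∀ (u v : List α), u ++ v ∈ shuffle u v
  | [], v => by simp [shuffle]
  | x :: u, [] => by simp [shuffle]
  | x :: u, y :: v => by
      rw [shuffle]
      exact Or.inl ⟨u ++ y :: v, mem_shuffle_left u (y :: v), rfl⟩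

lemma mem_shuffle_right : ∀ (u v : List α), v ++ u ∈ shuffle u v
  | [], v => by simp [shuffle]
  | x :: u, [] => by simp [shuffle]
  | x :: u, y :: v => by
      rw [shuffle]
      exact Or.inr ⟨v ++ x :: u, mem_shuffle_right (x :: u) v, rfl⟩

lemma cons_mem_shuffle (s v : List α) (x : α) : x :: (s ++ v) ∈ shuffle s (x :: v) := by
  cases s with
  | nil => simp [shuffle]
  | cons y s' =>
      rw [shuffle]
      exact Or.inr ⟨(y :: s') ++ v, mem_shuffle_left (y :: s') v, rfl⟩

lemma Shuffles_append_singleton (ws : List (List α)) (u : List α) :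
    Shuffles (ws ++ [u]) = ⋃ v ∈ Shuffles ws, shuffle v u := by
  simp [Shuffles, List.foldl_append]

lemma mem_Shuffles_step {ws : List (List α)} {s : List α} (hs : s ∈ Shuffles ws)
    {u r : List α} (hr : r ∈ shuffle s u) : r ∈ Shuffles (ws ++ [u]) := by
  rw [Shuffles_append_singleton]
  exact Set.mem_biUnion hs hr

lemma Shuffles_extend : ∀ (l : List (List α)) (ws : List (List α)) (s : List α),
    s ∈ Shuffles ws → ∃ t, s ++ t ∈ Shuffles (ws ++ l)
  | [], ws, s, hs => ⟨[], by simpa using hs⟩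
  | u :: l, ws, s, hs => by
      have h1 : s ++ u ∈ Shuffles (ws ++ [u]) :=
        mem_Shuffles_step hs (mem_shuffle_left s u)
      obtain ⟨t, ht⟩ := Shuffles_extend l (ws ++ [u]) (s ++ u) h1
      exact ⟨u ++ t, by simpa [List.append_assoc] using ht⟩

lemma Shuffles_nonempty (ws : List (List α)) : ∃ s, s ∈ Shuffles ws := by
  obtain ⟨t, ht⟩ := Shuffles_extend ws [] [] (by simp [Shuffles])
  exact ⟨t, by simpa using ht⟩

lemma exists_prefix_one (l₁ l₂ : List (List α)) (u : List α) :
    ∃ t, u ++ t ∈ Shuffles (l₁ ++ u :: l₂) := by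
  obtain ⟨s, hs⟩ := Shuffles_nonempty l₁
  have h1 : u ++ s ∈ Shuffles (l₁ ++ [u]) :=
    mem_Shuffles_step hs (mem_shuffle_right s u)
  obtain ⟨t, ht⟩ := Shuffles_extend l₂ (l₁ ++ [u]) (u ++ s) h1
  exact ⟨s ++ t, by simpa [List.append_assoc] using ht⟩

lemma exists_prefix_two (l₁ l₂ : List (List α)) (x y : α) (u v : List α) :
    ∃ t, x :: y :: t ∈ Shuffles (l₁ ++ (x :: u) :: (y :: v) :: l₂) := by
  obtain ⟨t, ht⟩ := exists_prefix_one l₁ [] (x :: u)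
  have h1 : x :: y :: (u ++ t ++ v) ∈ Shuffles ((l₁ ++ [x :: u]) ++ [y :: v]) := by
    refine mem_Shuffles_step (by simpa using ht) ?_
    rw [shuffle]
    have hm : y :: (u ++ t ++ v) ∈ shuffle (u ++ t) (y :: v) := by
      simpa [List.append_assoc] using cons_mem_shuffle (u ++ t) v y
    exact Or.inl ⟨y :: (u ++ t ++ v), hm, rfl⟩
  obtain ⟨r, hr⟩ := Shuffles_extend l₂ _ _ h1
  exact ⟨u ++ t ++ v ++ r, by simpa [List.append_assoc] using hr⟩

end

/-- with `K = bA^* ∪ aaA^* ∪ (ab)^*`, every tuple of `n ≥ 2` nonempty words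
over `{a, b}` has some interleaving in `K`. -/
theorem stmt16 (n : ℕ) (hn : 2 ≤ n) (w : Fin n → List AB) (hw : ∀ i, w i ≠ []) :
    (Shuffles (List.ofFn w) ∩
        ({v : List AB | ∃ t, v = AB.b :: t} ∪
          {v : List AB | ∃ t, v = AB.a :: AB.a :: t} ∪
          star [AB.a, AB.b])).Nonempty := by
  set ws := List.ofFn w with hws
  have hlen : ws.length = n := List.length_ofFn
  by_cases hb : ∃ i t, w i = AB.b :: t
  · obtain ⟨i, t, hit⟩ := hb
    have hi : (i : ℕ) < ws.length := by rw [hlen]; exact i.isLt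
    have hdec : ws = ws.take i ++ (AB.b :: t) :: ws.drop (i + 1) := by
      conv_lhs => rw [← List.take_append_drop i ws, List.drop_eq_getElem_cons hi]
      congr 2
      simp [hws, hit]
    obtain ⟨t', ht'⟩ := exists_prefix_one (ws.take i) (ws.drop (i + 1)) (AB.b :: t)
    rw [← hdec] at ht'
    exact ⟨AB.b :: (t ++ t'), ht', Or.inl (Or.inl ⟨t ++ t', rfl⟩)⟩
  · push_neg at hb
    have ha : ∀ i : Fin n, ∃ t, w i = AB.a :: t := by
      intro i
      cases hwi : w i with
      | nil => exact absurd hwi (hw i)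
      | cons x t =>
          cases x with
          | a => exact ⟨t, rfl⟩
          | b => exact absurd hwi (hb i t)
    have h0 : (0 : ℕ) < ws.length := by omega
    have h1 : (1 : ℕ) < ws.length := by omega
    obtain ⟨u0, hu0⟩ := ha ⟨0, by omega⟩
    obtain ⟨u1, hu1⟩ := ha ⟨1, by omega⟩
    have hdec : ws = [] ++ (AB.a :: u0) :: (AB.a :: u1) :: ws.drop 2 := by
      rw [List.nil_append, ← hu0, ← hu1]
      conv_lhs => rw [← List.drop_zero (l := ws), List.drop_eq_getElem_cons h0,
        List.drop_eq_getElem_cons h1]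
      congr 1
      · simp [hws]
      · congr 1
        simp [hws]
    obtain ⟨t', ht'⟩ := exists_prefix_two [] (ws.drop 2) AB.a AB.a u0 u1
    rw [← hdec] at ht'
    exact ⟨AB.a :: AB.a :: t', ht', Or.inl (Or.inr ⟨t', rfl⟩)⟩

end CTS
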